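/- Let B ∈ ℝ³ with b := |B| > 0 and let B̂ be its hat matrix. Then for every t ∈ ℝ, the matrix exponential satisfies exp(t·B̂) = I + (sin(bt)/b)·B̂ + ((1 − cos(bt))/b²)·B̂². -/

import Mathlib

open Matrix
open scoped Matrix BigOperators

noncomputable section

/-- The hat matrix of a vector `B ∈ ℝ³`, satisfying `B̂ v = v × B`. -/
def hatMatrix (B : Fin 3 → ℝ) : Matrix (Fin 3) (Fin 3) ℝ :=
  !![0, B 2, -(B 1); -(B 2), 0, B 0; B 1, -(B 0), 0]

/-- The Euclidean norm of a vector in ℝ³. -/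
def enorm3 (B : Fin 3 → ℝ) : ℝ := Real.sqrt (∑ i, B i ^ 2)

lemma enorm3_sq (B : Fin 3 → ℝ) : enorm3 B ^ 2 = ∑ i, B i ^ 2 :=
  Real.sq_sqrt (by positivity)

lemma hatMatrix_cube (B : Fin 3 → ℝ) :
    hatMatrix B ^ 3 = (-(enorm3 B ^ 2)) • hatMatrix B := by
  rw [enorm3_sq]
  rw [pow_succ, pow_two]
  ext i j
  fin_cases i <;> fin_cases j <;>
    simp [hatMatrix, Matrix.mul_apply, Fin.sum_univ_succ] <;> ring

lemma hatMatrix_pow_odd (B : Fin 3 → ℝ) (k : ℕ) :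
    hatMatrix B ^ (2 * k + 1) = ((-(enorm3 B ^ 2)) ^ k) • hatMatrix B := by
  induction k with
  | zero => simp
  | succ k ih =>
    have h : 2 * (k + 1) + 1 = (2 * k + 1) + 1 + 1 := by ring
    rw [h, pow_succ, pow_succ, ih, Matrix.smul_mul, Matrix.smul_mul,
      show hatMatrix B * hatMatrix B * hatMatrix B = hatMatrix B ^ 3 from by
        rw [pow_succ, pow_two],
      hatMatrix_cube, smul_smul, ← pow_succ]

lemma hatMatrix_pow_even (B : Fin 3 → ℝ) (k : ℕ) :
    hatMatrix B ^ (2 * (k + 1)) =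
      ((-(enorm3 B ^ 2)) ^ k) • (hatMatrix B * hatMatrix B) := by
  have h : 2 * (k + 1) = (2 * k + 1) + 1 := by ring
  rw [h, pow_succ, hatMatrix_pow_odd, Matrix.smul_mul]

/-- Rodrigues-type formula for the matrix exponential of `t • B̂`. -/
theorem exp_hatMatrix (B : Fin 3 → ℝ) (hb : 0 < enorm3 B) (t : ℝ) :
    NormedSpace.exp (t • hatMatrix B) =
      1 + (Real.sin (enorm3 B * t) / enorm3 B) • hatMatrix B +
        ((1 - Real.cos (enorm3 B * t)) / (enorm3 B) ^ 2) • (hatMatrix B * hatMatrix B) := by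
  set b := enorm3 B with hbdef
  have hb0 : b ≠ 0 := ne_of_gt hb
  set A := hatMatrix B with hA
  rw [NormedSpace.exp_eq_tsum ℝ]
  refine HasSum.tsum_eq ?_
  have key : ∀ n : ℕ, ((n.factorial : ℝ)⁻¹) • (t • A) ^ n = ((t ^ n / n.factorial : ℝ)) • A ^ n := by
    intro n
    rw [smul_pow, smul_smul, div_eq_inv_mul]
  simp_rw [key]
  rw [add_right_comm]
  refine HasSum.even_add_odd ?_ ?_
  · -- even part
    have hcos := Real.hasSum_cos (b * t)
    have hshift : HasSum (fun k : ℕ => (-1 : ℝ) ^ (k + 1) * (b * t) ^ (2 * (k + 1)) / ((2 * (k + 1)).factorial : ℝ))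
        (Real.cos (b * t) - 1) := by
      have := (hasSum_nat_add_iff' (f := fun n : ℕ => (-1 : ℝ) ^ n * (b * t) ^ (2 * n) / ((2 * n).factorial : ℝ)) 1).mpr hcos
      simpa using this
    have hscal : HasSum (fun k : ℕ => (-((-1 : ℝ) ^ (k + 1) * (b * t) ^ (2 * (k + 1)) / ((2 * (k + 1)).factorial : ℝ))) / b ^ 2)
        ((1 - Real.cos (b * t)) / b ^ 2) := by
      have := (hshift.neg).div_const (b ^ 2)
      simpa [neg_sub] using this
    have hmat := hscal.smul_const (A * A)
    -- now convert
    have base : HasSum (fun k : ℕ => (t ^ (2 * (k + 1)) / (2 * (k + 1)).factorial) • A ^ (2 * (k + 1)))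
        (((1 - Real.cos (b * t)) / b ^ 2) • (A * A)) := by
      convert hmat using 2 with k
      rw [hatMatrix_pow_even, smul_smul]
      congr 1
      have h2 : (2 : ℕ) * (k + 1) = 2 * k + 2 := by ring
      have hb2 : b ^ (2 * k + 2) = (b ^ 2) ^ k * b ^ 2 := by rw [pow_add, pow_mul]
      rw [h2, ← hbdef, mul_pow, hb2, neg_pow]
      field_simp
      ring
    refine (hasSum_nat_add_iff'
      (f := fun k : ℕ => ((t ^ (2 * k) / (2 * k).factorial : ℝ)) • A ^ (2 * k))
      (g := 1 + ((1 - Real.cos (b * t)) / b ^ 2) • (A * A)) 1).mp ?_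
    have h0 : ∑ i ∈ Finset.range 1, ((t ^ (2 * i) / (2 * i).factorial : ℝ)) • A ^ (2 * i) = 1 := by
      simp
    rw [h0, add_sub_cancel_left]
    exact base
  · -- odd part
    have hsin := Real.hasSum_sin (b * t)
    have hscal := (hsin.div_const b).smul_const A
    convert hscal using 2 with k
    · rfl
    rw [hatMatrix_pow_odd, smul_smul]
    congr 1
    have hb1 : b ^ (2 * k + 1) = (b ^ 2) ^ k * b := by rw [pow_add, pow_mul, pow_one]
    rw [← hbdef, mul_pow, hb1, neg_pow]
    field_simp

end
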